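/- Let G be a graph with infinite edge motion, let γ be a non-trivial automorphism of G, and let v be a vertex moved by γ such that every vertex in the connected component of v in the subgraph induced by the vertices moved by γ has finite degree in G. Then there is a ray (a one-way infinite path) in G starting at v all of whose vertices are moved by γ. -/

import Mathlib

namespace Stmt1Aux

variable {V : Type} {W : Type}

/-! ### Part 1: extracting a ray from an infinite locally finite component -/

/-- Vertices reachable from `x` by a walk avoiding the finite set `L`. -/
def good (H : SimpleGraph W) (L : Finset W) (x : W) : Set W :=
  {w | ∃ p : H.Walk x w, ∀ y ∈ p.support, y ∉ L}

lemma walk_exit [DecidableEq W] {H : SimpleGraph W} (L : Finset W) :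
    ∀ (n : ℕ) (x w : W) (p : H.Walk x w), p.length ≤ n → w ≠ x →
      (∀ y ∈ p.support, y ∉ L) →
      ∃ (u : W) (q : H.Walk u w), H.Adj x u ∧ u ≠ x ∧ (∀ y ∈ q.support, y ∉ L) ∧
        x ∉ q.support := by
  intro n
  induction n with
  | zero =>
    intro x w p hl hw _
    cases p with
    | nil => exact absurd rfl hw
    | cons h q => simp [SimpleGraph.Walk.length_cons] at hl
  | succ n ih =>
    intro x w p hl hw hp
    cases p with
    | nil => exact absurd rfl hw
    | @cons _ u _ h q =>
      by_cases hxq : x ∈ q.support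
      · have hq' : (q.dropUntil x hxq).length ≤ n := by
          have h1 := SimpleGraph.Walk.length_dropUntil_le q hxq
          have h2 : q.length + 1 ≤ n + 1 := by
            simpa [SimpleGraph.Walk.length_cons] using hl
          omega
        exact ih x w (q.dropUntil x hxq) hq' hw
          (fun y hy => hp y (by
            rw [SimpleGraph.Walk.support_cons]
            exact List.mem_cons_of_mem _ (SimpleGraph.Walk.support_dropUntil_subset q hxq hy)))
      · refine ⟨u, q, h, ?_, ?_, hxq⟩
        · intro h'; exact hxq (h' ▸ q.start_mem_support)
        · intro y hy
          exact hp y (by rw [SimpleGraph.Walk.support_cons]; exact List.mem_cons_of_mem _ hy)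

lemma exists_next [DecidableEq W] {H : SimpleGraph W} {L : Finset W} {x w : W}
    (hw : w ≠ x) (hwin : w ∈ good H L x) :
    ∃ u, H.Adj x u ∧ u ∉ insert x L ∧ w ∈ good H (insert x L) u := by
  obtain ⟨p, hp⟩ := hwin
  obtain ⟨u, q, hadj, hux, hq, hxq⟩ := walk_exit L p.length x w p le_rfl hw hp
  refine ⟨u, hadj, ?_, q, ?_⟩
  · simp only [Finset.mem_insert, not_or]
    exact ⟨hux, hq u q.start_mem_support⟩
  · intro y hy
    simp only [Finset.mem_insert, not_or]
    exact ⟨fun h => hxq (h ▸ hy), hq y hy⟩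

lemma good_step [DecidableEq W] {H : SimpleGraph W} {a : W}
    (hfin : ∀ w, H.Reachable w a → (H.neighborSet w).Finite)
    {L : Finset W} {x : W} (hr : H.Reachable x a)
    (hinf : (good H L x).Infinite) :
    ∃ u, H.Adj x u ∧ u ∉ insert x L ∧ (good H (insert x L) u).Infinite := by
  classical
  by_contra hcon
  push_neg at hcon
  have hN : (H.neighborSet x).Finite := hfin x hr
  have hsub : good H L x ⊆
      insert x (⋃ u ∈ H.neighborSet x, {w | u ∉ insert x L ∧ w ∈ good H (insert x L) u}) := by
    intro w hw
    by_cases hwx : w = x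
    · exact hwx ▸ Set.mem_insert _ _
    · obtain ⟨u, h1, h2, h3⟩ := exists_next hwx hw
      refine Set.mem_insert_iff.mpr (Or.inr ?_)
      exact Set.mem_biUnion (SimpleGraph.mem_neighborSet H x u |>.mpr h1) ⟨h2, h3⟩
  have hfin2 : (insert x (⋃ u ∈ H.neighborSet x,
      {w | u ∉ insert x L ∧ w ∈ good H (insert x L) u})).Finite := by
    refine Set.Finite.insert x (Set.Finite.biUnion hN ?_)
    intro u hu
    by_cases h : u ∈ insert x L
    · refine Set.Finite.subset Set.finite_empty ?_
      intro w hw; exact absurd h hw.1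
    · have hadj : H.Adj x u := hu
      have := (hcon u hadj h)
      exact this.subset (fun w hw => hw.2)
  exact hinf (hfin2.subset hsub)

lemma exists_ray [DecidableEq W] (H : SimpleGraph W) (a : W)
    (hfin : ∀ w, H.Reachable w a → (H.neighborSet w).Finite)
    (hinf : {w | H.Reachable w a}.Infinite) :
    ∃ f : ℕ → W, Function.Injective f ∧ f 0 = a ∧ ∀ n, H.Adj (f n) (f (n + 1)) := by
  classical
  let P : Finset W × W → Prop := fun p => p.2 ∉ p.1 ∧ H.Reachable p.2 a ∧ (good H p.1 p.2).Infinite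
  have hstep : ∀ p, P p → ∃ u, H.Adj p.2 u ∧ P (insert p.2 p.1, u) := by
    rintro ⟨L, x⟩ ⟨h1, h2, h3⟩
    obtain ⟨u, hu1, hu2, hu3⟩ := good_step hfin h2 h3
    exact ⟨u, hu1, hu2, (hu1.symm.reachable).trans h2, hu3⟩
  have h0 : P (∅, a) := by
    refine ⟨Finset.notMem_empty a, SimpleGraph.Reachable.refl a, hinf.mono ?_⟩
    intro w hw
    obtain ⟨p⟩ := hw.symm
    exact ⟨p, fun y _ => Finset.notMem_empty y⟩
  let nxt : {p : Finset W × W // P p} → {p : Finset W × W // P p} := fun s =>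
    ⟨(insert s.1.2 s.1.1, (hstep s.1 s.2).choose), (hstep s.1 s.2).choose_spec.2⟩
  let g : ℕ → {p : Finset W × W // P p} := fun n => nxt^[n] ⟨(∅, a), h0⟩
  have hg : ∀ n, g (n + 1) = nxt (g n) := fun n => Function.iterate_succ_apply' nxt n _
  have hadj : ∀ n, H.Adj (g n).1.2 (g (n + 1)).1.2 := by
    intro n
    rw [hg n]
    exact (hstep (g n).1 (g n).2).choose_spec.1
  have hL : ∀ n, (g (n + 1)).1.1 = insert (g n).1.2 (g n).1.1 := fun n => by rw [hg n]
  have hmem : ∀ m n, m < n → (g m).1.2 ∈ (g n).1.1 := by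
    intro m n h
    induction n with
    | zero => omega
    | succ n ih =>
      rw [hL n]
      rcases Nat.lt_succ_iff_lt_or_eq.mp h with h' | h'
      · exact Finset.mem_insert_of_mem (ih h')
      · rw [h']; exact Finset.mem_insert_self _ _
  refine ⟨fun n => (g n).1.2, ?_, rfl, hadj⟩
  intro m n hmn
  dsimp only at hmn
  rcases lt_trichotomy m n with h | h | h
  · exfalso; have := hmem m n h; rw [hmn] at this; exact (g n).2.1 this
  · exact h
  · exfalso; have := hmem n m h; rw [← hmn] at this; exact (g m).2.1 this

/-! ### Part 2: the mixed automorphism -/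

open Classical in
noncomputable def mixFun (γ δ : V → V) (C D : Set V) : V → V :=
  fun x => if x ∈ C then γ x else if x ∈ D then δ x else x

lemma mixFun_pos (f g : V → V) (A B : Set V) (z : V) (hz : z ∈ A) :
    mixFun f g A B z = f z := by
  simp only [mixFun]; rw [if_pos hz]

lemma mixFun_mid (f g : V → V) (A B : Set V) (z : V) (h1 : z ∉ A) (h2 : z ∈ B) :
    mixFun f g A B z = g z := by
  simp only [mixFun]; rw [if_neg h1, if_pos h2]

lemma mixFun_out (f g : V → V) (A B : Set V) (z : V) (h1 : z ∉ A) (h2 : z ∉ B) :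
    mixFun f g A B z = z := by
  simp only [mixFun]; rw [if_neg h1, if_neg h2]

lemma mix_left_inv (γ : V ≃ V) (C D : Set V) (hD : D = ⇑γ '' C)
    (hCD : C = D ∨ Disjoint C D) :
    ∀ x, mixFun ⇑γ ⇑γ.symm C D (mixFun ⇑γ.symm ⇑γ D C x) = x := by
  intro x
  by_cases hxD : x ∈ D
  · have hcx : γ.symm x ∈ C := by
      rw [hD] at hxD; obtain ⟨c, hc, rfl⟩ := hxD
      rw [Equiv.symm_apply_apply]; exact hc
    rw [mixFun_pos _ _ _ _ _ hxD, mixFun_pos _ _ _ _ _ hcx, Equiv.apply_symm_apply]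
  · by_cases hxC : x ∈ C
    · have hγD : γ x ∈ D := hD ▸ Set.mem_image_of_mem ⇑γ hxC
      rcases hCD with hEq | hdis
      · exact absurd (hEq ▸ hxC) hxD
      · have hγC : γ x ∉ C := fun hc => Set.disjoint_left.mp hdis hc hγD
        rw [mixFun_mid _ _ _ _ _ hxD hxC, mixFun_mid _ _ _ _ _ hγC hγD,
          Equiv.symm_apply_apply]
    · rw [mixFun_out _ _ _ _ _ hxD hxC, mixFun_out _ _ _ _ _ hxC hxD]

lemma mix_adj {G : SimpleGraph V} (γ : V ≃ V)
    (hγ : ∀ a b, G.Adj (γ a) (γ b) ↔ G.Adj a b)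
    (C D : Set V) (hCD : C = D ∨ Disjoint C D)
    (hCM : ∀ x ∈ C, γ x ≠ x)
    (hDM : ∀ x ∈ D, γ x ≠ x)
    (hCcl : ∀ x ∈ C, ∀ y, γ y ≠ y → G.Adj x y → y ∈ C)
    (hDcl : ∀ x ∈ D, ∀ y, γ y ≠ y → G.Adj x y → y ∈ D)
    {x y : V} (h : G.Adj x y) :
    G.Adj (mixFun ⇑γ ⇑γ.symm C D x) (mixFun ⇑γ ⇑γ.symm C D y) := by
  have hγ' : ∀ a b, G.Adj (γ.symm a) (γ.symm b) ↔ G.Adj a b := by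
    intro a b
    constructor
    · intro h'
      have := (hγ _ _).mpr h'
      rwa [γ.apply_symm_apply, γ.apply_symm_apply] at this
    · intro h'
      apply (hγ (γ.symm a) (γ.symm b)).mp
      rwa [γ.apply_symm_apply, γ.apply_symm_apply]
  have hfix : ∀ z, γ z = z → γ.symm z = z := by
    intro z hz
    nth_rewrite 1 [← hz]
    exact γ.symm_apply_apply z
  have vC : ∀ z, z ∈ C → mixFun ⇑γ ⇑γ.symm C D z = γ z := fun z hz =>
    mixFun_pos _ _ _ _ _ hz
  have vD : ∀ z, z ∉ C → z ∈ D → mixFun ⇑γ ⇑γ.symm C D z = γ.symm z := fun z h1 h2 =>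
    mixFun_mid _ _ _ _ _ h1 h2
  have vO : ∀ z, z ∉ C → z ∉ D → mixFun ⇑γ ⇑γ.symm C D z = z := fun z h1 h2 =>
    mixFun_out _ _ _ _ _ h1 h2
  by_cases hxC : x ∈ C
  · by_cases hyC : y ∈ C
    · rw [vC x hxC, vC y hyC]; exact (hγ x y).mpr h
    · have hyfix : γ y = y := by
        by_contra hne; exact hyC (hCcl x hxC y hne h)
      have hyD : y ∉ D := fun hyD => hDM y hyD hyfix
      rw [vC x hxC, vO y hyC hyD]
      have := (hγ x y).mpr h
      rwa [hyfix] at this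
  · by_cases hxD : x ∈ D
    · by_cases hyD : y ∈ D
      · have hyC : y ∉ C := by
          rcases hCD with hEq | hdis
          · exact fun _ => hxC (hEq.symm ▸ hxD)
          · exact fun hyC => Set.disjoint_left.mp hdis hyC hyD
        rw [vD x hxC hxD, vD y hyC hyD]
        exact (hγ' x y).mpr h
      · have hyfix : γ y = y := by
          by_contra hne; exact hyD (hDcl x hxD y hne h)
        have hyC : y ∉ C := fun hyC => hCM y hyC hyfix
        rw [vD x hxC hxD, vO y hyC hyD]
        have := (hγ' x y).mpr h
        rwa [hfix y hyfix] at this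
    · by_cases hyC : y ∈ C
      · have hxfix : γ x = x := by
          by_contra hne; exact hxC (hCcl y hyC x hne h.symm)
        rw [vO x hxC hxD, vC y hyC]
        have := (hγ x y).mpr h
        rwa [hxfix] at this
      · by_cases hyD : y ∈ D
        · have hxfix : γ x = x := by
            by_contra hne; exact hxD (hDcl y hyD x hne h.symm)
          rw [vO x hxC hxD, vD y hyC hyD]
          have := (hγ' x y).mpr h
          rwa [hfix x hxfix] at this
        · rw [vO x hxC hxD, vO y hyC hyD]; exact h

/-- Transfer along a walk in the induced graph: a set closed under adjacency
into `M` absorbs walks. -/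
lemma reach_trans {G : SimpleGraph V} {M : Set V} (S : Set V)
    (hS : ∀ x ∈ S, ∀ y ∈ M, G.Adj x y → y ∈ S) :
    ∀ {w1 w2 : ↥M}, (G.induce M).Walk w1 w2 → ↑w1 ∈ S → ↑w2 ∈ S := by
  intro w1 w2 p
  induction p with
  | nil => exact id
  | @cons a b c hab p ih =>
    intro h1
    exact ih (hS _ h1 _ b.2 hab)

end Stmt1Aux

open Stmt1Aux in
/-- If `G` has infinite edge motion, `γ` is a non-trivial automorphism,
`v` is a vertex moved by `γ` such that every vertex in the connected component of `v`
in the subgraph induced by the moved vertices has finite degree in `G`, then there is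
a ray in `G` starting at `v` all of whose vertices are moved by `γ`. -/
theorem stmt_1 {V : Type} (G : SimpleGraph V)
    (hmotion : ∀ γ : G ≃g G, (∃ v, γ v ≠ v) →
      {e : Sym2 V | e ∈ G.edgeSet ∧ e.map γ ≠ e}.Infinite)
    (γ : G ≃g G) (hnt : ∃ u, γ u ≠ u)
    (v : V) (hv : γ v ≠ v)
    (hfin : ∀ w : {x | γ x ≠ x},
      (G.induce {x | γ x ≠ x}).Reachable w ⟨v, hv⟩ →
      (G.neighborSet (w : V)).Finite) :
    ∃ f : ℕ → V, Function.Injective f ∧ f 0 = v ∧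
      (∀ n, G.Adj (f n) (f (n + 1))) ∧ (∀ n, γ (f n) ≠ f n) := by
  classical
  set M : Set V := {x | γ x ≠ x} with hMdef
  have hloc : ∀ w : ↥M, (G.induce M).Reachable w ⟨v, hv⟩ →
      ((G.induce M).neighborSet w).Finite := by
    intro w hw
    have hG := hfin w hw
    have hsub : ((G.induce M).neighborSet w) ⊆ Subtype.val ⁻¹' (G.neighborSet ↑w) := by
      intro u hu; exact hu
    exact (hG.preimage Subtype.val_injective.injOn).subset hsub
  have hCMinf : {w : ↥M | (G.induce M).Reachable w ⟨v, hv⟩}.Infinite := by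
    by_contra hfinC
    rw [Set.not_infinite] at hfinC
    set CM : Set ↥M := {w : ↥M | (G.induce M).Reachable w ⟨v, hv⟩} with hCMdef
    set C : Set V := Subtype.val '' CM with hCdef
    have hCfin : C.Finite := hfinC.image _
    have hvC : v ∈ C := ⟨⟨v, hv⟩, SimpleGraph.Reachable.refl _, rfl⟩
    have hCsubM : ∀ x ∈ C, γ x ≠ x := by rintro x ⟨w, _, rfl⟩; exact w.2
    have hCcl : ∀ x ∈ C, ∀ y, γ y ≠ y → G.Adj x y → y ∈ C := by
      rintro x ⟨w, hw, rfl⟩ y hy hadj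
      refine ⟨⟨y, hy⟩, ?_, rfl⟩
      have hyw : (G.induce M).Adj ⟨y, hy⟩ w := hadj.symm
      exact hyw.reachable.trans hw
    let γe : V ≃ V := γ.toEquiv
    have hγe : ∀ a b, G.Adj (γe a) (γe b) ↔ G.Adj a b := fun a b => γ.map_rel_iff
    have hγe' : ∀ a b, G.Adj (γe.symm a) (γe.symm b) ↔ G.Adj a b := by
      intro a b
      constructor
      · intro h'
        have := (hγe _ _).mpr h'
        rwa [γe.apply_symm_apply, γe.apply_symm_apply] at this
      · intro h'
        apply (hγe (γe.symm a) (γe.symm b)).mp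
        rwa [γe.apply_symm_apply, γe.apply_symm_apply]
    set D : Set V := ⇑γe '' C with hDdef
    have hDsubM : ∀ x ∈ D, γ x ≠ x := by
      rintro x ⟨c, hc, rfl⟩
      intro heq
      exact hCsubM c hc (γe.injective heq)
    have hmovedIff : ∀ z : V, γe.symm z ≠ z ↔ γ z ≠ z := by
      intro z
      have h1 : γe.symm z = z ↔ γe z = z := by rw [Equiv.symm_apply_eq, eq_comm]
      exact not_congr h1
    have hDcl : ∀ x ∈ D, ∀ y, γ y ≠ y → G.Adj x y → y ∈ D := by
      rintro x ⟨c, hc, rfl⟩ y hy hadj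
      refine ⟨γe.symm y, ?_, γe.apply_symm_apply y⟩
      apply hCcl c hc
      · intro heq
        apply hy
        have heq' : γe (γe.symm y) = γe.symm y := heq
        have h2 : γe (γe.symm y) = y := γe.apply_symm_apply y
        have h3 : y = γe.symm y := h2.symm.trans heq'
        exact (congrArg γe h3).trans h2
      · apply (hγe c (γe.symm y)).mp
        rwa [γe.apply_symm_apply]
    -- the two components are equal or disjoint
    have hCD : C = D ∨ Disjoint C D := by
      by_cases hdis : Disjoint C D
      · exact Or.inr hdis
      · left
        obtain ⟨z, hzC, hzD⟩ := Set.not_disjoint_iff.mp hdis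
        apply Set.Subset.antisymm
        · rintro x ⟨w, hw, rfl⟩
          obtain ⟨zw, hzw, hzeq⟩ := hzC
          obtain ⟨p⟩ : (G.induce M).Reachable zw w := hzw.trans hw.symm
          exact reach_trans D hDcl p (hzeq ▸ hzD)
        · rintro x ⟨c, hc, rfl⟩
          obtain ⟨cw, hcw, rfl⟩ := hc
          obtain ⟨c0, hc0, hzeq⟩ := hzD
          obtain ⟨c0w, hc0w, rfl⟩ := hc0
          have hγM : ∀ w : ↥M, γ ↑w ∈ M := by
            intro w
            intro heq
            exact w.2 (γe.injective heq)
          let γH : G.induce M →g G.induce M :=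
            ⟨fun w => ⟨γ ↑w, hγM w⟩, fun {a b} hab => γ.map_rel_iff.mpr hab⟩
          obtain ⟨p⟩ : (G.induce M).Reachable (γH c0w) (γH cw) :=
            SimpleGraph.Reachable.map γH (hc0w.trans hcw.symm)
          have hstart : ↑(γH c0w) ∈ C := by
            have : (↑(γH c0w) : V) = z := hzeq
            rw [this]; exact hzC
          exact reach_trans C hCcl p hstart
    have hDfin : D.Finite := hCfin.image _
    -- auxiliary facts for the reversed instantiation
    have hCimg' : C = ⇑γe.symm '' D := by
      rw [hDdef, Equiv.symm_image_image]
    have hCD' : D = C ∨ Disjoint D C := hCD.imp Eq.symm fun h => h.symm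
    have hDM' : ∀ x ∈ D, γe.symm x ≠ x := fun x hx => (hmovedIff x).mpr (hDsubM x hx)
    have hCM' : ∀ x ∈ C, γe.symm x ≠ x := fun x hx => (hmovedIff x).mpr (hCsubM x hx)
    have hDcl' : ∀ x ∈ D, ∀ y, γe.symm y ≠ y → G.Adj x y → y ∈ D :=
      fun x hx y hy => hDcl x hx y ((hmovedIff y).mp hy)
    have hCcl' : ∀ x ∈ C, ∀ y, γe.symm y ≠ y → G.Adj x y → y ∈ C :=
      fun x hx y hy => hCcl x hx y ((hmovedIff y).mp hy)
    have hla : ∀ x, mixFun ⇑γe.symm ⇑γe D C (mixFun ⇑γe ⇑γe.symm C D x) = x := by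
      have h := mix_left_inv γe.symm D C hCimg' hCD'
      simpa using h
    have hra : ∀ x, mixFun ⇑γe ⇑γe.symm C D (mixFun ⇑γe.symm ⇑γe D C x) = x :=
      mix_left_inv γe C D hDdef hCD
    have hfwd : ∀ {a b : V}, G.Adj a b →
        G.Adj (mixFun ⇑γe ⇑γe.symm C D a) (mixFun ⇑γe ⇑γe.symm C D b) :=
      fun {a b} h => mix_adj γe hγe C D hCD hCsubM hDsubM hCcl hDcl h
    have hbwd : ∀ {a b : V},
        G.Adj (mixFun ⇑γe ⇑γe.symm C D a) (mixFun ⇑γe ⇑γe.symm C D b) → G.Adj a b := by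
      intro a b h
      have h2 := mix_adj γe.symm hγe' D C hCD' hDM' hCM' hDcl' hCcl' h
      simp only [Equiv.symm_symm] at h2
      rwa [hla a, hla b] at h2
    let σ : G ≃g G :=
      ⟨⟨mixFun ⇑γe ⇑γe.symm C D, mixFun ⇑γe.symm ⇑γe D C, hla, hra⟩, ⟨hbwd, hfwd⟩⟩
    have hσv : σ v ≠ v := by
      have hval : σ v = γe v := by
        exact mixFun_pos _ _ _ _ _ hvC
      rw [hval]; exact hv
    have hfixO : ∀ z, z ∉ C → z ∉ D → σ z = z := by
      intro z h1 h2
      exact mixFun_out _ _ _ _ _ h1 h2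
    have hsub2 : {e : Sym2 V | e ∈ G.edgeSet ∧ e.map ⇑σ ≠ e} ⊆
        ⋃ x ∈ C ∪ D, G.incidenceSet x := by
      intro e
      refine Sym2.ind (fun a b => ?_) e
      rintro ⟨he, hne⟩
      by_cases haCD : a ∈ C ∪ D
      · exact Set.mem_biUnion haCD ⟨he, Sym2.mem_mk_left a b⟩
      · by_cases hbCD : b ∈ C ∪ D
        · exact Set.mem_biUnion hbCD ⟨he, Sym2.mem_mk_right a b⟩
        · exfalso
          apply hne
          rw [Set.mem_union, not_or] at haCD hbCD
          rw [Sym2.map_pair_eq, hfixO a haCD.1 haCD.2, hfixO b hbCD.1 hbCD.2]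
    have hnb : ∀ x ∈ C ∪ D, (G.neighborSet x).Finite := by
      rintro x (hx | hx)
      · obtain ⟨w, hw, rfl⟩ := hx; exact hfin w hw
      · obtain ⟨c, hc, rfl⟩ := hx
        obtain ⟨w, hw, rfl⟩ := hc
        have h1 : (G.neighborSet ↑w).Finite := hfin w hw
        have himg : G.neighborSet (γe ↑w) = ⇑γe '' G.neighborSet ↑w := by
          ext y
          simp only [SimpleGraph.mem_neighborSet, Set.mem_image]
          constructor
          · intro hy
            refine ⟨γe.symm y, ?_, γe.apply_symm_apply y⟩
            have h2 : G.Adj (γe ↑w) (γe (γe.symm y)) := by rwa [γe.apply_symm_apply]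
            exact (hγe _ _).mp h2
          · rintro ⟨u, hu, rfl⟩
            exact (hγe _ _).mpr hu
        rw [himg]
        exact h1.image _
    have hinc : ∀ x ∈ C ∪ D, (G.incidenceSet x).Finite := by
      intro x hx
      haveI := (hnb x hx).to_subtype
      exact Set.finite_coe_iff.mp (Finite.of_equiv _ (G.incidenceSetEquivNeighborSet x).symm)
    have hfinal : {e : Sym2 V | e ∈ G.edgeSet ∧ e.map ⇑σ ≠ e}.Finite :=
      (((hCfin.union hDfin).biUnion hinc).subset hsub2)
    exact hfinal.not_infinite (hmotion σ ⟨v, hσv⟩)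
  obtain ⟨f, hinj, hf0, hadjf⟩ := exists_ray (G.induce M) ⟨v, hv⟩ hloc hCMinf
  refine ⟨fun n => ↑(f n), Subtype.val_injective.comp hinj, congrArg Subtype.val hf0,
    fun n => hadjf n, fun n => (f n).2⟩
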